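/- (Dominating Option, parts (i) and (ii)) Let G=(V,E_L,E_R) be an achievement positional game and let u,v∈V be such that {u},{v}∉E_L∪E_R and, for every edge e∈E_L∪E_R, u∈e implies v∈e. Then o(G_u) ≤_L o(G_v) and o(G^v) ≤_L o(G^u). -/

import Mathlib

namespace APG

/-- The two players: Left and Right. -/
inductive Player : Type
  | L : Player
  | R : Player
deriving DecidableEq, Repr

/-- The opponent of a player. -/
def Player.other : Player → Player
  | .L => .R
  | .R => .L

/-- An achievement positional game: a finite vertex set together with the set of
blue edges (Left's winning sets) and the set of red edges (Right's winning sets). -/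
structure Game : Type where
  V : Finset ℕ
  EL : Finset (Finset ℕ)
  ER : Finset (Finset ℕ)

/-- The edges are nonempty subsets of the vertex set. -/
def WellFormed (G : Game) : Prop :=
  (∀ e ∈ G.EL, e ⊆ G.V ∧ e.Nonempty) ∧ (∀ e ∈ G.ER, e ⊆ G.V ∧ e.Nonempty)

/-- The winning sets of a given player. -/
def Game.edges (G : Game) : Player → Finset (Finset ℕ)
  | .L => G.EL
  | .R => G.ER

/-- The player who makes the `i`-th move (0-indexed) when `s` moves first. -/
def mover (s : Player) (i : ℕ) : Player := if i % 2 = 0 then s else s.other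

/-- The set of vertices picked by player `p` along the history `h`
(the chronological list of the moves played so far), when `s` moved first. -/
def picked (s p : Player) (h : List ℕ) : Finset ℕ :=
  ((Finset.range h.length).filter fun i => mover s i = p).image fun i => h.getD i 0

/-- The set `S` of picked vertices fills some edge of `E`. -/
def fills (E : Finset (Finset ℕ)) (S : Finset ℕ) : Prop := ∃ e ∈ E, e ⊆ S

/-- The game is over: some player has picked all the vertices of one of their edges. -/
def ended (G : Game) (s : Player) (h : List ℕ) : Prop :=
  fills G.EL (picked s .L h) ∨ fills G.ER (picked s .R h)

/-- `h` is a legal history: no vertex is picked twice, every picked vertex belongs to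
the board, and no move is made after the game has ended. -/
def ValidHist (G : Game) (s : Player) (h : List ℕ) : Prop :=
  h.Nodup ∧ (∀ x ∈ h, x ∈ G.V) ∧ ∀ k, k < h.length → ¬ ended G s (h.take k)

/-- A strategy: a map assigning to each position (history) a vertex to pick. -/
abbrev Strategy := List ℕ → ℕ

/-- Along `h`, every move of player `p` agrees with the strategy `σ`. -/
def Follows (s p : Player) (σ : Strategy) (h : List ℕ) : Prop :=
  ∀ k, k < h.length → mover s k = p → h.getD k 0 = σ (h.take k)

/-- A finished play: either the game has ended or all vertices have been picked. -/
def Complete (G : Game) (s : Player) (h : List ℕ) : Prop :=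
  ended G s h ∨ h.length = G.V.card

/-- The strategy `σ` of player `p` always suggests a legal move (an unpicked vertex)
whenever the game is not over and it is `p`'s turn. -/
def Legal (G : Game) (s p : Player) (σ : Strategy) : Prop :=
  ∀ h, ValidHist G s h → Follows s p σ h → ¬ ended G s h → h.length < G.V.card →
    mover s h.length = p → σ h ∈ G.V ∧ σ h ∉ h

/-- Player `p` has a winning strategy on `G` when `s` moves first: following it,
every finished play ends with `p` having filled one of their edges (and, the game
having ended right there, the opponent has not filled an edge first). -/
def WinsAs (G : Game) (s p : Player) : Prop :=
  ∃ σ : Strategy, Legal G s p σ ∧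
    ∀ h, ValidHist G s h → Follows s p σ h → Complete G s h →
      fills (G.edges p) (picked s p h)

/-- Player `p` has a non-losing strategy on `G` when `s` moves first: following it,
the opponent never fills one of their edges. -/
def NonLosingAs (G : Game) (s p : Player) : Prop :=
  ∃ σ : Strategy, Legal G s p σ ∧
    ∀ h, ValidHist G s h → Follows s p σ h → Complete G s h →
      ¬ fills (G.edges p.other) (picked s p.other h)

/-- The possible results of the game, for a fixed starting player. -/
inductive Result : Type
  | Lwin : Result
  | draw : Result
  | Rwin : Result
deriving DecidableEq, Repr

/-- The result of `G` with optimal play, when `s` moves first, is `r`: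
a win for a player means that player has a winning strategy, a draw means
both players have non-losing strategies. -/
def resultIs (G : Game) (s : Player) : Result → Prop
  | .Lwin => WinsAs G s .L
  | .Rwin => WinsAs G s .R
  | .draw => NonLosingAs G s .L ∧ NonLosingAs G s .R

/-- An outcome: the pair of results with optimal play
(when Left starts, when Right starts). -/
abbrev Outcome := Result × Result

/-- `G` has outcome `o`. -/
def hasOutcome (G : Game) (o : Outcome) : Prop :=
  resultIs G .L o.1 ∧ resultIs G .R o.2

/-- Numerical value of a result, from Left's point of view:
Right wins < draw < Left wins. -/
def Result.val : Result → ℕ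
  | .Rwin => 0
  | .draw => 1
  | .Lwin => 2

/-- The partial order `≤_L` on outcomes, comparing both components simultaneously
from Left's point of view. -/
def outLE (o o' : Outcome) : Prop := o.1.val ≤ o'.1.val ∧ o.2.val ≤ o'.2.val

def oL : Outcome := (.Lwin, .Lwin)
def oLminus : Outcome := (.Lwin, .draw)
def oN : Outcome := (.Lwin, .Rwin)
def oD : Outcome := (.draw, .draw)
def oRminus : Outcome := (.draw, .Rwin)
def oR : Outcome := (.Rwin, .Rwin)

/-- The updated game `G_u` after Left has picked `u`. -/
def subL (G : Game) (u : ℕ) : Game where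
  V := G.V.erase u
  EL := G.EL.image fun e => e.erase u
  ER := G.ER.filter fun e => u ∉ e

/-- The updated game `G^u` after Right has picked `u`. -/
def subR (G : Game) (u : ℕ) : Game where
  V := G.V.erase u
  EL := G.EL.filter fun e => u ∉ e
  ER := G.ER.image fun e => e.erase u

/-- The updated game `G_u^v` after Left has picked `u` and Right has picked `v`. -/
def updLR (G : Game) (u v : ℕ) : Game where
  V := (G.V.erase u).erase v
  EL := (G.EL.filter fun e => v ∉ e).image fun e => e.erase u
  ER := (G.ER.filter fun e => u ∉ e).image fun e => e.erase v

/-- The disjoint union of two games. -/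
def gunion (G G' : Game) : Game where
  V := G.V ∪ G'.V
  EL := G.EL ∪ G'.EL
  ER := G.ER ∪ G'.ER

/-! ### Auxiliary lemmas -/

attribute [local instance] Classical.propDecidable

lemma Player.other_ne (p : Player) : p.other ≠ p := by cases p <;> simp [Player.other]

lemma Player.other_other (p : Player) : p.other.other = p := by cases p <;> rfl

lemma ended_iff (G : Game) (s : Player) (h : List ℕ) (p : Player) :
    ended G s h ↔ fills (G.edges p) (picked s p h) ∨
      fills (G.edges p.other) (picked s p.other h) := by
  cases p <;> simp [ended, Game.edges, Player.other, or_comm]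

lemma fills_mono {E : Finset (Finset ℕ)} {S T : Finset ℕ} (hST : S ⊆ T)
    (h : fills E S) : fills E T := by
  obtain ⟨e, he, hs⟩ := h
  exact ⟨e, he, hs.trans hST⟩

lemma picked_nil (s p : Player) : picked s p [] = ∅ := by
  simp [picked]

lemma picked_map (s p : Player) (f : ℕ → ℕ) (h : List ℕ) :
    picked s p (h.map f) = (picked s p h).image f := by
  unfold picked
  rw [List.length_map, Finset.image_image]
  apply Finset.image_congr
  intro i hi
  simp only [Finset.coe_filter, Set.mem_setOf_eq, Finset.mem_range] at hi
  have hlen : i < h.length := hi.1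
  show (h.map f).getD i 0 = f (h.getD i 0)
  rw [List.getD_eq_getElem _ _ (by simpa using hlen), List.getD_eq_getElem _ _ hlen,
    List.getElem_map]

lemma picked_take_eq (s p : Player) (k : ℕ) (h : List ℕ)
    (hk : ∀ i, k ≤ i → i < h.length → mover s i ≠ p) :
    picked s p (h.take k) = picked s p h := by
  unfold picked
  rw [List.length_take]
  have hfil : (Finset.range (min k h.length)).filter (fun i => mover s i = p)
      = (Finset.range h.length).filter (fun i => mover s i = p) := by
    ext i
    simp only [Finset.mem_filter, Finset.mem_range, lt_min_iff]
    constructor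
    · rintro ⟨⟨_, h2⟩, h3⟩; exact ⟨h2, h3⟩
    · rintro ⟨h1, h2⟩
      refine ⟨⟨?_, h1⟩, h2⟩
      by_contra hik
      exact hk i (le_of_not_gt hik) h1 h2
  rw [hfil]
  apply Finset.image_congr
  intro i hi
  simp only [Finset.coe_filter, Set.mem_setOf_eq, Finset.mem_range] at hi
  have hik : i < k := by
    by_contra hik
    exact hk i (le_of_not_gt hik) hi.1 hi.2
  have hlen : i < (h.take k).length := by
    rw [List.length_take]; exact lt_min hik hi.1
  show (h.take k).getD i 0 = h.getD i 0
  rw [List.getD_eq_getElem _ _ hlen, List.getD_eq_getElem _ _ hi.1, List.getElem_take]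

lemma ValidHist.take {G : Game} {s : Player} {h : List ℕ} (hv : ValidHist G s h) (k : ℕ) :
    ValidHist G s (h.take k) := by
  refine ⟨hv.1.sublist (List.take_sublist k h), fun x hx => hv.2.1 x (List.mem_of_mem_take hx), ?_⟩
  intro j hj
  rw [List.length_take, lt_min_iff] at hj
  rw [List.take_take, min_eq_left hj.1.le]
  exact hv.2.2 j hj.2

lemma Follows.take {s p : Player} {σ : Strategy} {h : List ℕ} (hf : Follows s p σ h) (k : ℕ) :
    Follows s p σ (h.take k) := by
  intro j hj hm
  rw [List.length_take, lt_min_iff] at hj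
  have h1 : (h.take k).getD j 0 = h.getD j 0 := by
    rw [List.getD_eq_getElem _ _ (by rw [List.length_take]; exact lt_min hj.1 hj.2),
      List.getD_eq_getElem _ _ hj.2, List.getElem_take]
  rw [h1, List.take_take, min_eq_left hj.1.le]
  exact hf j hj.2 hm

lemma ValidHist.length_le {G : Game} {s : Player} {h : List ℕ} (hv : ValidHist G s h) :
    h.length ≤ G.V.card := by
  rw [← List.toFinset_card_of_nodup hv.1]
  exact Finset.card_le_card (fun x hx => hv.2.1 x (List.mem_toFinset.mp hx))
lemma not_both_fills (G : Game) (hG : WellFormed G) (s : Player) (h : List ℕ)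
    (hv : ValidHist G s h) :
    ¬ (fills G.EL (picked s .L h) ∧ fills G.ER (picked s .R h)) := by
  rintro ⟨hfL, hfR⟩
  rcases Nat.eq_zero_or_pos h.length with h0 | hpos
  · obtain ⟨eL, heL, hsL⟩ := hfL
    obtain ⟨x, hx⟩ := (hG.1 eL heL).2
    have hpe : picked s Player.L h = ∅ := by
      rw [List.length_eq_zero_iff.mp h0, picked_nil]
    rw [hpe] at hsL
    exact absurd (hsL hx) (Finset.notMem_empty x)
  · set n := h.length with hn
    have hother : ∀ p : Player, mover s (n-1) ≠ p →
        picked s p (h.take (n-1)) = picked s p h := by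
      intro p hp
      apply picked_take_eq
      intro i hi1 hi2 him
      have hieq : i = n - 1 := le_antisymm (Nat.le_sub_one_of_lt hi2) hi1
      rw [hieq] at him
      exact hp him
    have hend : ended G s (h.take (n-1)) := by
      cases hq : mover s (n-1) with
      | L =>
        exact Or.inr ((hother Player.R (by rw [hq]; simp)) ▸ hfR)
      | R =>
        exact Or.inl ((hother Player.L (by rw [hq]; simp)) ▸ hfL)
    exact hv.2.2 (n-1) (Nat.sub_lt hpos one_pos) hend

/-- The play in which both players follow their respective strategies. -/
noncomputable def extendPlay (G : Game) (s : Player) (σL σR : Strategy) : ℕ → List ℕ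
  | 0 => []
  | k+1 =>
    let h := extendPlay G s σL σR k
    if Complete G s h then h
    else h ++ [if mover s h.length = Player.L then σL h else σR h]

lemma extendPlay_spec (G : Game) (s : Player) (σL σR : Strategy)
    (hL : Legal G s .L σL) (hR : Legal G s .R σR) (k : ℕ) :
    ValidHist G s (extendPlay G s σL σR k) ∧ Follows s .L σL (extendPlay G s σL σR k) ∧
      Follows s .R σR (extendPlay G s σL σR k) ∧
      (Complete G s (extendPlay G s σL σR k) ∨ (extendPlay G s σL σR k).length = k) := by
  induction k with
  | zero =>
    show ValidHist G s [] ∧ Follows s Player.L σL [] ∧ Follows s Player.R σR [] ∧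
      (Complete G s [] ∨ ([] : List ℕ).length = 0)
    refine ⟨⟨List.nodup_nil, by simp, by simp⟩, ?_, ?_, Or.inr rfl⟩ <;>
      · intro j hj; simp at hj
  | succ k ih =>
    obtain ⟨hV, hFL, hFR, hC⟩ := ih
    set h := extendPlay G s σL σR k with hh
    have hstep : extendPlay G s σL σR (k+1) =
        if Complete G s h then h
        else h ++ [if mover s h.length = Player.L then σL h else σR h] := rfl
    rw [hstep]
    by_cases hcomp : Complete G s h
    · rw [if_pos hcomp]
      exact ⟨hV, hFL, hFR, Or.inl hcomp⟩
    · rw [if_neg hcomp]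
      have hlenk : h.length = k := by
        rcases hC with hC | hC
        · exact absurd hC hcomp
        · exact hC
      have hne : ¬ ended G s h := fun he => hcomp (Or.inl he)
      have hlt : h.length < G.V.card :=
        lt_of_le_of_ne hV.length_le (fun he => hcomp (Or.inr he))
      set x := if mover s h.length = Player.L then σL h else σR h with hx
      have hxprop : x ∈ G.V ∧ x ∉ h := by
        rw [hx]
        by_cases hm : mover s h.length = Player.L
        · simp only [if_pos hm]
          exact hL h hV hFL hne hlt hm
        · simp only [if_neg hm]
          have hm' : mover s h.length = Player.R := by
            cases hmm : mover s h.length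
            · exact absurd hmm hm
            · rfl
          exact hR h hV hFR hne hlt hm'
      have htake : ∀ j, j ≤ h.length → (h ++ [x]).take j = h.take j :=
        fun j hj => List.take_append_of_le_length hj
      have htakeh : (h ++ [x]).take h.length = h := by
        rw [htake _ le_rfl, List.take_length]
      have hgetD : ∀ j, j < h.length → (h ++ [x]).getD j 0 = h.getD j 0 := by
        intro j hj
        rw [List.getD_eq_getElem _ _ (by simp; omega), List.getD_eq_getElem _ _ hj]
        exact List.getElem_append_left hj
      have hgetlast : (h ++ [x]).getD h.length 0 = x := by
        rw [List.getD_eq_getElem _ _ (by simp)]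
        simp
      have hlen' : (h ++ [x]).length = h.length + 1 := by simp
      refine ⟨⟨?_, ?_, ?_⟩, ?_, ?_, Or.inr (by rw [hlen', hlenk])⟩
      · simp [List.nodup_append, hV.1, hxprop.2]; exact fun a ha hax => hxprop.2 (hax ▸ ha)
      · intro y hy
        rcases List.mem_append.mp hy with hy | hy
        · exact hV.2.1 y hy
        · rw [List.mem_singleton.mp hy]; exact hxprop.1
      · intro j hj
        rw [hlen'] at hj
        rcases Nat.lt_succ_iff_lt_or_eq.mp hj with hj | hj
        · rw [htake j hj.le]
          exact hV.2.2 j hj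
        · rw [hj, htakeh]
          exact hne
      · -- Follows L
        intro j hj hm
        rw [hlen'] at hj
        rcases Nat.lt_succ_iff_lt_or_eq.mp hj with hj | hj
        · rw [hgetD j hj, htake j hj.le]
          exact hFL j hj hm
        · rw [hj, hgetlast, htake _ le_rfl, List.take_length]
          rw [hj] at hm
          rw [hx, if_pos hm]
      · -- Follows R
        intro j hj hm
        rw [hlen'] at hj
        rcases Nat.lt_succ_iff_lt_or_eq.mp hj with hj | hj
        · rw [hgetD j hj, htake j hj.le]
          exact hFR j hj hm
        · rw [hj, hgetlast, htake _ le_rfl, List.take_length]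
          rw [hj] at hm
          rw [hx, if_neg (by rw [hm]; exact fun hc => Player.other_ne .L (by cases s <;> simpa [mover] using hc))]
lemma exists_joint (G : Game) (s : Player) (σL σR : Strategy)
    (hL : Legal G s .L σL) (hR : Legal G s .R σR) :
    ∃ h, ValidHist G s h ∧ Follows s .L σL h ∧ Follows s .R σR h ∧ Complete G s h := by
  obtain ⟨hV, hFL, hFR, hC⟩ := extendPlay_spec G s σL σR hL hR G.V.card
  refine ⟨extendPlay G s σL σR G.V.card, hV, hFL, hFR, ?_⟩
  rcases hC with hC | hC
  · exact hC
  · exact Or.inr hC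

lemma not_wins_nonlosing (G : Game) (s p : Player) :
    WinsAs G s p → NonLosingAs G s p.other → False := by
  rintro ⟨σ, hσL, hσW⟩ ⟨τ, hτL, hτW⟩
  cases p with
  | L =>
    obtain ⟨h, hV, hFL, hFR, hC⟩ := exists_joint G s σ τ hσL hτL
    exact hτW h hV hFR hC (hσW h hV hFL hC)
  | R =>
    obtain ⟨h, hV, hFL, hFR, hC⟩ := exists_joint G s τ σ hτL hσL
    exact hτW h hV hFL hC (hσW h hV hFR hC)

lemma not_wins_both (G : Game) (hG : WellFormed G) (s : Player) :
    WinsAs G s .L → WinsAs G s .R → False := by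
  rintro ⟨σ, hσL, hσW⟩ ⟨τ, hτL, hτW⟩
  obtain ⟨h, hV, hFL, hFR, hC⟩ := exists_joint G s σ τ hσL hτL
  exact not_both_fills G hG s h hV ⟨hσW h hV hFL hC, hτW h hV hFR hC⟩
lemma transfer_win (H H' : Game) (p : Player) (φ : ℕ ≃ ℕ)
    (hV : H'.V = H.V.image φ)
    (hP : ∀ f ∈ H.edges p, ∃ f' ∈ H'.edges p, f' ⊆ f.image φ)
    (hO : ∀ f' ∈ H'.edges p.other, ∃ f ∈ H.edges p.other, f ⊆ f'.image φ.symm)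
    (s : Player) : WinsAs H s p → WinsAs H' s p := by
  rintro ⟨σ, hLeg, hWin⟩
  have himim : ∀ S : Finset ℕ, (S.image φ.symm).image φ = S := by
    intro S
    rw [Finset.image_image]
    simp
  have hcard : H'.V.card = H.V.card := by
    rw [hV, Finset.card_image_of_injective _ φ.injective]
  have hF1 : ∀ S : Finset ℕ, fills (H.edges p) S → fills (H'.edges p) (S.image φ) := by
    rintro S ⟨e, he, hs⟩
    obtain ⟨f', hf', hsub⟩ := hP e he
    exact ⟨f', hf', hsub.trans (Finset.image_subset_image hs)⟩
  have hF2 : ∀ S : Finset ℕ, fills (H'.edges p.other) S →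
      fills (H.edges p.other) (S.image φ.symm) := by
    rintro S ⟨e, he, hs⟩
    obtain ⟨f, hf, hsub⟩ := hO e he
    exact ⟨f, hf, hsub.trans (Finset.image_subset_image hs)⟩
  set τ : Strategy := fun h' => φ (σ (h'.map φ.symm)) with hτ
  have hfillreal : ∀ h' : List ℕ, fills (H.edges p) (picked s p (h'.map φ.symm)) →
      fills (H'.edges p) (picked s p h') := by
    intro h' hf
    have := hF1 _ hf
    rwa [picked_map, himim] at this
  have hfillimag : ∀ h' : List ℕ, fills (H'.edges p.other) (picked s p.other h') →
      fills (H.edges p.other) (picked s p.other (h'.map φ.symm)) := by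
    intro h' hf
    have := hF2 _ hf
    rwa [← picked_map] at this
  have hgetDmap : ∀ (l : List ℕ) k, k < l.length →
      (l.map φ.symm).getD k 0 = φ.symm (l.getD k 0) := by
    intro l k hk
    rw [List.getD_eq_getElem _ _ (by simpa using hk), List.getD_eq_getElem _ _ hk,
      List.getElem_map]
  -- Follows transfers unconditionally
  have hB : ∀ h' : List ℕ, Follows s p τ h' → Follows s p σ (h'.map φ.symm) := by
    intro h' hf' k hk hm
    rw [List.length_map] at hk
    rw [hgetDmap h' k hk, hf' k hk hm, hτ]
    simp only [Equiv.symm_apply_apply]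
    rw [List.map_take]
  -- ended transfers, given validity of the imagined history
  have hCC : ∀ h' : List ℕ, ValidHist H s (h'.map φ.symm) → Follows s p σ (h'.map φ.symm) →
      ended H s (h'.map φ.symm) → ended H' s h' := by
    intro h' hA hBh hend
    exact (ended_iff H' s h' p).mpr (Or.inl (hfillreal h' (hWin _ hA hBh (Or.inl hend))))
  -- validity of the imagined history, by strong induction on length
  have hA : ∀ n (h' : List ℕ), h'.length ≤ n → ValidHist H' s h' → Follows s p τ h' →
      ValidHist H s (h'.map φ.symm) := by
    intro n
    induction n with
    | zero =>
      intro h' hlen _ _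
      rw [List.length_eq_zero_iff.mp (Nat.le_zero.mp hlen)]
      exact ⟨List.nodup_nil, by simp, by intro j hj; simp at hj⟩
    | succ n ihn =>
      intro h' hlen hv' hf'
      refine ⟨hv'.1.map φ.symm.injective, ?_, ?_⟩
      · intro x hx
        obtain ⟨y, hy, rfl⟩ := List.mem_map.mp hx
        have := hv'.2.1 y hy
        rw [hV] at this
        obtain ⟨z, hz, rfl⟩ := Finset.mem_image.mp this
        simpa using hz
      · intro k hk
        rw [List.length_map] at hk
        rw [← List.map_take]
        have hvk : ValidHist H' s (h'.take k) := hv'.take k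
        have hfk : Follows s p τ (h'.take k) := hf'.take k
        have hlenk : (h'.take k).length ≤ n := by
          rw [List.length_take]
          have : k ≤ n := by omega
          exact le_trans (min_le_left _ _) this
        have hAk := ihn (h'.take k) hlenk hvk hfk
        intro hend
        exact hv'.2.2 k hk (hCC (h'.take k) hAk (hB _ hfk) hend)
  refine ⟨τ, ?_, ?_⟩
  · -- Legal
    intro h' hv' hf' hne hlen hm
    have hAh := hA h'.length h' le_rfl hv' hf'
    have hBh := hB h' hf'
    have hneI : ¬ ended H s (h'.map φ.symm) := fun he => hne (hCC h' hAh hBh he)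
    have hlenI : (h'.map φ.symm).length < H.V.card := by
      rw [List.length_map, ← hcard]
      exact hlen
    have hmI : mover s (h'.map φ.symm).length = p := by
      rw [List.length_map]; exact hm
    obtain ⟨hm1, hm2⟩ := hLeg (h'.map φ.symm) hAh hBh hneI hlenI hmI
    constructor
    · rw [hV]
      exact Finset.mem_image.mpr ⟨_, hm1, rfl⟩
    · intro hmem
      apply hm2
      have : φ.symm (τ h') ∈ h'.map φ.symm := List.mem_map.mpr ⟨τ h', hmem, rfl⟩
      simpa [hτ] using this
  · -- winning guarantee
    intro h' hv' hf' hcomp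
    have hAh := hA h'.length h' le_rfl hv' hf'
    have hBh := hB h' hf'
    rcases hcomp with hend' | hfull
    · rcases (ended_iff H' s h' p).mp hend' with hfp | hfo
      · exact hfp
      · have : ended H s (h'.map φ.symm) :=
          (ended_iff H s _ p).mpr (Or.inr (hfillimag h' hfo))
        exact hfillreal h' (hWin _ hAh hBh (Or.inl this))
    · have : Complete H s (h'.map φ.symm) := by
        right
        rw [List.length_map, hfull, hcard]
      exact hfillreal h' (hWin _ hAh hBh this)
lemma wellFormed_subL (G : Game) (hG : WellFormed G) (u : ℕ)
    (hsu : ({u} : Finset ℕ) ∉ G.EL) : WellFormed (subL G u) := by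
  constructor
  · intro f hf
    obtain ⟨e, he, rfl⟩ := Finset.mem_image.mp hf
    refine ⟨Finset.erase_subset_erase _ (hG.1 e he).1, ?_⟩
    rw [Finset.nonempty_iff_ne_empty]
    intro hc
    rcases (Finset.erase_eq_empty_iff e u).mp hc with hc | hc
    · exact Finset.not_nonempty_empty (hc ▸ (hG.1 e he).2)
    · exact hsu (hc ▸ he)
  · intro f hf
    have hf' : f ∈ G.ER ∧ u ∉ f := Finset.mem_filter.mp hf
    exact ⟨Finset.subset_erase.mpr ⟨(hG.2 f hf'.1).1, hf'.2⟩, (hG.2 f hf'.1).2⟩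

lemma wellFormed_subR (G : Game) (hG : WellFormed G) (u : ℕ)
    (hsu : ({u} : Finset ℕ) ∉ G.ER) : WellFormed (subR G u) := by
  constructor
  · intro f hf
    have hf' : f ∈ G.EL ∧ u ∉ f := Finset.mem_filter.mp hf
    exact ⟨Finset.subset_erase.mpr ⟨(hG.1 f hf'.1).1, hf'.2⟩, (hG.1 f hf'.1).2⟩
  · intro f hf
    obtain ⟨e, he, rfl⟩ := Finset.mem_image.mp hf
    refine ⟨Finset.erase_subset_erase _ (hG.2 e he).1, ?_⟩
    rw [Finset.nonempty_iff_ne_empty]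
    intro hc
    rcases (Finset.erase_eq_empty_iff e u).mp hc with hc | hc
    · exact Finset.not_nonempty_empty (hc ▸ (hG.2 e he).2)
    · exact hsu (hc ▸ he)

lemma erase_image_swap {u v : ℕ} (V : Finset ℕ) (hu : u ∈ V) (hv : v ∈ V) :
    (V.erase u).image (Equiv.swap u v) = V.erase v := by
  ext x
  simp only [Finset.mem_image, Finset.mem_erase]
  constructor
  · rintro ⟨y, ⟨hyu, hyV⟩, rfl⟩
    constructor
    · intro hxv
      apply hyu
      apply (Equiv.swap u v).injective
      rw [hxv, Equiv.swap_apply_left]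
    · rcases eq_or_ne y v with rfl | hyv
      · rw [Equiv.swap_apply_right]
        exact hu
      · rw [Equiv.swap_apply_of_ne_of_ne hyu hyv]
        exact hyV
  · rintro ⟨hxv, hxV⟩
    refine ⟨Equiv.swap u v x, ⟨?_, ?_⟩, Equiv.swap_apply_self u v x⟩
    · intro hc
      apply hxv
      apply (Equiv.swap u v).injective
      rw [hc, Equiv.swap_apply_right]
    · rcases eq_or_ne x u with rfl | hxu
      · rw [Equiv.swap_apply_left]
        exact hv
      · rw [Equiv.swap_apply_of_ne_of_ne hxu hxv]
        exact hxV

lemma erase_subset_image_swap {u v : ℕ} (e : Finset ℕ) (hdome : u ∈ e → v ∈ e) :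
    e.erase v ⊆ (e.erase u).image (Equiv.swap u v) := by
  intro x hx
  obtain ⟨hxv, hxe⟩ := Finset.mem_erase.mp hx
  rcases eq_or_ne x u with rfl | hxu
  · exact Finset.mem_image.mpr ⟨v, Finset.mem_erase.mpr ⟨fun hc => hxv hc.symm, hdome hxe⟩,
      Equiv.swap_apply_right _ _⟩
  · exact Finset.mem_image.mpr ⟨x, Finset.mem_erase.mpr ⟨hxu, hxe⟩,
      Equiv.swap_apply_of_ne_of_ne hxu hxv⟩

lemma subset_image_swap {u v : ℕ} (e : Finset ℕ) (hue : u ∉ e) (hve : v ∉ e) :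
    e ⊆ e.image (Equiv.swap u v) := by
  intro x hx
  exact Finset.mem_image.mpr ⟨x, hx,
    Equiv.swap_apply_of_ne_of_ne (fun hc => hue (hc ▸ hx)) (fun hc => hve (hc ▸ hx))⟩

lemma result_le (H H' : Game) (hH' : WellFormed H')
    (tL : ∀ s, WinsAs H s .L → WinsAs H' s .L)
    (tR : ∀ s, WinsAs H' s .R → WinsAs H s .R)
    (s : Player) (r r' : Result) (hr : resultIs H s r) (hr' : resultIs H' s r') :
    r.val ≤ r'.val := by
  cases r with
  | Lwin =>
    cases r' with
    | Lwin => exact le_rfl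
    | draw => exact absurd hr'.2 (fun hc => not_wins_nonlosing H' s .L (tL s hr) hc)
    | Rwin => exact absurd hr' (fun hc => not_wins_both H' hH' s (tL s hr) hc)
  | draw =>
    cases r' with
    | Lwin => exact Nat.le_succ 1
    | draw => exact le_rfl
    | Rwin => exact absurd hr.1 (fun hc => not_wins_nonlosing H s .R (tR s hr') hc)
  | Rwin => exact Nat.zero_le _
/-- Dominating option, parts (i) and (ii): if every edge containing `u` also contains
`v`, then `o(G_u) ≤_L o(G_v)` and `o(G^v) ≤_L o(G^u)`. -/
theorem dominating_option_i_ii (G : Game) (hG : WellFormed G) (u v : ℕ)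
    (hu : u ∈ G.V) (hv : v ∈ G.V)
    (hsu : ({u} : Finset ℕ) ∉ G.EL ∪ G.ER) (hsv : ({v} : Finset ℕ) ∉ G.EL ∪ G.ER)
    (hdom : ∀ e ∈ G.EL ∪ G.ER, u ∈ e → v ∈ e) :
    (∀ o o' : Outcome, hasOutcome (subL G u) o → hasOutcome (subL G v) o' → outLE o o') ∧
    (∀ o o' : Outcome, hasOutcome (subR G v) o → hasOutcome (subR G u) o' → outLE o o') := by
  have hsuR : ({u} : Finset ℕ) ∉ G.ER := fun hc => hsu (Finset.mem_union_right _ hc)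
  have hsvL : ({v} : Finset ℕ) ∉ G.EL := fun hc => hsv (Finset.mem_union_left _ hc)
  have hdomL : ∀ e ∈ G.EL, u ∈ e → v ∈ e := fun e he => hdom e (Finset.mem_union_left _ he)
  have hdomR : ∀ e ∈ G.ER, u ∈ e → v ∈ e := fun e he => hdom e (Finset.mem_union_right _ he)
  set φ := Equiv.swap u v with hφ
  have hφsymm : φ.symm = φ := Equiv.symm_swap u v
  have hφcomm : φ = Equiv.swap v u := Equiv.swap_comm u v
  have hVab : G.V.erase v = (G.V.erase u).image φ := (erase_image_swap G.V hu hv).symm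
  have hVba : G.V.erase u = (G.V.erase v).image φ := by
    rw [hφcomm]
    exact (erase_image_swap G.V hv hu).symm
  -- part (i) transfers
  have tiL : ∀ s, WinsAs (subL G u) s .L → WinsAs (subL G v) s .L := by
    intro s
    apply transfer_win _ _ .L φ hVab
    · intro f hf
      obtain ⟨e, he, rfl⟩ :=
        Finset.mem_image.mp (show f ∈ G.EL.image (fun e => e.erase u) from hf)
      exact ⟨e.erase v, Finset.mem_image.mpr ⟨e, he, rfl⟩,
        erase_subset_image_swap e (hdomL e he)⟩
    · intro f' hf'
      have hf2 : f' ∈ G.ER ∧ v ∉ f' := Finset.mem_filter.mp hf'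
      have huf : u ∉ f' := fun hc => hf2.2 (hdomR f' hf2.1 hc)
      refine ⟨f', Finset.mem_filter.mpr ⟨hf2.1, huf⟩, ?_⟩
      rw [hφsymm]
      exact subset_image_swap f' huf hf2.2
  have tiR : ∀ s, WinsAs (subL G v) s .R → WinsAs (subL G u) s .R := by
    intro s
    apply transfer_win _ _ .R φ hVba
    · intro f hf
      have hf2 : f ∈ G.ER ∧ v ∉ f := Finset.mem_filter.mp hf
      have huf : u ∉ f := fun hc => hf2.2 (hdomR f hf2.1 hc)
      exact ⟨f, Finset.mem_filter.mpr ⟨hf2.1, huf⟩, subset_image_swap f huf hf2.2⟩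
    · intro f' hf'
      obtain ⟨e, he, rfl⟩ :=
        Finset.mem_image.mp (show f' ∈ G.EL.image (fun e => e.erase u) from hf')
      refine ⟨e.erase v, Finset.mem_image.mpr ⟨e, he, rfl⟩, ?_⟩
      rw [hφsymm]
      exact erase_subset_image_swap e (hdomL e he)
  -- part (ii) transfers
  have tiiL : ∀ s, WinsAs (subR G v) s .L → WinsAs (subR G u) s .L := by
    intro s
    apply transfer_win _ _ .L φ hVba
    · intro f hf
      have hf2 : f ∈ G.EL ∧ v ∉ f := Finset.mem_filter.mp hf
      have huf : u ∉ f := fun hc => hf2.2 (hdomL f hf2.1 hc)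
      exact ⟨f, Finset.mem_filter.mpr ⟨hf2.1, huf⟩, subset_image_swap f huf hf2.2⟩
    · intro f' hf'
      obtain ⟨e, he, rfl⟩ :=
        Finset.mem_image.mp (show f' ∈ G.ER.image (fun e => e.erase u) from hf')
      refine ⟨e.erase v, Finset.mem_image.mpr ⟨e, he, rfl⟩, ?_⟩
      rw [hφsymm]
      exact erase_subset_image_swap e (hdomR e he)
  have tiiR : ∀ s, WinsAs (subR G u) s .R → WinsAs (subR G v) s .R := by
    intro s
    apply transfer_win _ _ .R φ hVab
    · intro f hf
      obtain ⟨e, he, rfl⟩ :=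
        Finset.mem_image.mp (show f ∈ G.ER.image (fun e => e.erase u) from hf)
      exact ⟨e.erase v, Finset.mem_image.mpr ⟨e, he, rfl⟩,
        erase_subset_image_swap e (hdomR e he)⟩
    · intro f' hf'
      have hf2 : f' ∈ G.EL ∧ v ∉ f' := Finset.mem_filter.mp hf'
      have huf : u ∉ f' := fun hc => hf2.2 (hdomL f' hf2.1 hc)
      refine ⟨f', Finset.mem_filter.mpr ⟨hf2.1, huf⟩, ?_⟩
      rw [hφsymm]
      exact subset_image_swap f' huf hf2.2
  have hWFv : WellFormed (subL G v) := wellFormed_subL G hG v hsvL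
  have hWFu' : WellFormed (subR G u) := wellFormed_subR G hG u hsuR
  constructor
  · intro o o' ho ho'
    exact ⟨result_le (subL G u) (subL G v) hWFv tiL tiR .L o.1 o'.1 ho.1 ho'.1,
      result_le (subL G u) (subL G v) hWFv tiL tiR .R o.2 o'.2 ho.2 ho'.2⟩
  · intro o o' ho ho'
    exact ⟨result_le (subR G v) (subR G u) hWFu' tiiL tiiR .L o.1 o'.1 ho.1 ho'.1,
      result_le (subR G v) (subR G u) hWFu' tiiL tiiR .R o.2 o'.2 ho.2 ho'.2⟩
end APG
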